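/- arXiv:1812.07604 — 2 statements merged into one kernel-verified Lean document; each statement's English description precedes it below -/
import Mathlib

section
/- For every n ≥ 3 and every index 0 ≤ i < n, the subspace 𝕊¹_n − {y_i} is open in 𝕊¹_n and is contractible. -/
open Set

/-- The underlying set of the finite model `𝕊¹_n` of the circle (`2n` points):
`Sum.inl i` is `x_i` and `Sum.inr i` is `y_i`. -/
def SCirc (n : ℕ) : Type := Fin n ⊕ Fin n

namespace SCirc

/-- The minimal point `x_i` of `𝕊¹_n`. -/
def x {n : ℕ} (i : Fin n) : SCirc n := Sum.inl i

/-- The maximal point `y_i` of `𝕊¹_n`. -/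
def y {n : ℕ} (i : Fin n) : SCirc n := Sum.inr i

/-- The partial order on `𝕊¹_n` generated by `x_i < y_i` and `x_{(i-1) mod n} < y_i`. -/
def le {n : ℕ} : SCirc n → SCirc n → Prop
  | Sum.inl i, Sum.inl j => i = j
  | Sum.inr i, Sum.inr j => i = j
  | Sum.inl i, Sum.inr j => i = j ∨ (i : ℕ) = ((j : ℕ) + n - 1) % n
  | Sum.inr _, Sum.inl _ => False

/-- The Alexandrov topology on `𝕊¹_n`: open sets are down-sets.  The minimal open
neighbourhoods are `x_i^↓ = {x_i}` and `y_i^↓ = {y_i, x_i, x_{(i-1) mod n}}`. -/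
instance (n : ℕ) : TopologicalSpace (SCirc n) where
  IsOpen U := ∀ a ∈ U, ∀ b, SCirc.le b a → b ∈ U
  isOpen_univ := fun _ _ _ _ => trivial
  isOpen_inter := fun _ _ hU hV a ha b hba => ⟨hU a ha.1 b hba, hV a ha.2 b hba⟩
  isOpen_sUnion := fun S hS a ha b hba => by
    obtain ⟨U, hUS, haU⟩ := ha
    exact ⟨U, hUS, hS U hUS a haU b hba⟩

end SCirc

namespace SCircAux

open Fin.CommRing

/-- Two continuous maps with pointwise specialization are homotopic. -/
lemma homotopic_of_specializes {X Y : Type*} [TopologicalSpace X] [TopologicalSpace Y]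
    (f g : C(X, Y)) (h : ∀ x, f x ⤳ g x) : f.Homotopic g := by
  refine ⟨⟨⟨fun p => if p.1 = 1 then g p.2 else f p.2, ?_⟩, ?_, ?_⟩⟩
  · rw [continuous_def]
    intro U hU
    have key : (fun p : unitInterval × X => if p.1 = 1 then g p.2 else f p.2) ⁻¹' U
        = (({(1 : unitInterval)}ᶜ : Set unitInterval) ×ˢ (f ⁻¹' U)) ∪
          ((univ : Set unitInterval) ×ˢ (g ⁻¹' U)) := by
      ext ⟨t, z⟩
      by_cases ht : t = 1
      · simp [ht]
      · have hfg : g z ∈ U → f z ∈ U := fun hz =>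
          (specializes_iff_forall_open.mp (h z)) U hU hz
        simp only [Set.mem_preimage, if_neg ht, Set.mem_union, Set.mem_prod,
          Set.mem_compl_iff, Set.mem_singleton_iff, Set.mem_univ, true_and]
        constructor
        · intro hf; exact Or.inl ⟨ht, hf⟩
        · rintro (⟨_, hf⟩ | hg); exact hf; exact hfg hg
    rw [key]
    exact ((isOpen_compl_singleton).prod (hU.preimage f.continuous)).union
      (isOpen_univ.prod (hU.preimage g.continuous))
  · intro z
    simp [(show (0 : unitInterval) ≠ 1 by norm_num)]
  · intro z
    simp

variable {n : ℕ}

lemma le_refl' : ∀ a : SCirc n, SCirc.le a a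
  | Sum.inl _ => rfl
  | Sum.inr _ => rfl

lemma le_trans' : ∀ {a b c : SCirc n}, SCirc.le a b → SCirc.le b c → SCirc.le a c
  | Sum.inl _, Sum.inl _, Sum.inl _, h1, h2 => h1.trans h2
  | Sum.inl _, Sum.inl _, Sum.inr _, h1, h2 => by
      cases h1; exact h2
  | Sum.inr _, Sum.inr _, Sum.inr _, h1, h2 => h1.trans h2
  | Sum.inl _, Sum.inr _, Sum.inr _, h1, h2 => by
      cases h2; exact h1

lemma isOpen_iff {U : Set (SCirc n)} :
    IsOpen U ↔ ∀ a ∈ U, ∀ b, SCirc.le b a → b ∈ U := Iff.rfl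

lemma isOpen_compl_y (i : Fin n) : IsOpen ({SCirc.y i}ᶜ : Set (SCirc n)) := by
  rw [isOpen_iff]
  rintro a ha b hba rfl
  apply ha
  cases a with
  | inl j => exact absurd hba (by exact id)
  | inr j => cases hba; rfl

lemma isOpen_subtype_iff {S : Set (SCirc n)} (hS : IsOpen S) {U : Set S} :
    IsOpen U ↔ ∀ a ∈ U, ∀ b : S, SCirc.le b.val a.val → b ∈ U := by
  constructor
  · intro hU a ha b hba
    rw [isOpen_induced_iff] at hU
    obtain ⟨V, hV, rfl⟩ := hU
    exact hV _ ha _ hba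
  · intro h
    rw [isOpen_induced_iff]
    refine ⟨Subtype.val '' U, ?_, Set.preimage_image_eq U Subtype.val_injective⟩
    rintro c ⟨a, haU, rfl⟩ b hbc
    have hbS : b ∈ S := hS _ a.2 _ hbc
    exact ⟨⟨b, hbS⟩, h a haU ⟨b, hbS⟩ hbc, rfl⟩

lemma specializes_of_le {a b : SCirc n} (h : SCirc.le b a) : b ⤳ a := by
  rw [specializes_iff_forall_open]
  exact fun U hU haU => hU _ haU _ h

lemma subtype_specializes_of_le {S : Set (SCirc n)} {a b : S}
    (h : SCirc.le b.val a.val) : b ⤳ a :=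
  (Topology.IsInducing.subtypeVal.specializes_iff).mp (specializes_of_le h)

section

variable [NeZero n]

/-- The `k`-th point along the fence `𝕊¹_n − {y_i}`. -/
def pt (i : Fin n) (k : ℕ) : SCirc n :=
  if k % 2 = 0 then Sum.inl (i + ((k / 2 : ℕ) : Fin n))
  else Sum.inr (i + ((k / 2 : ℕ) : Fin n) + 1)

/-- Position of a point along the fence. -/
def idx (i : Fin n) : SCirc n → ℕ
  | Sum.inl j => 2 * ((j - i : Fin n) : ℕ)
  | Sum.inr j => 2 * (((j - i : Fin n) : ℕ) - 1) + 1

lemma pt_even (i : Fin n) (m : ℕ) : pt i (2 * m) = Sum.inl (i + (m : Fin n)) := by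
  simp [pt, Nat.mul_div_cancel_left m (by norm_num : 0 < 2), Nat.mul_mod_right]
  rfl

lemma pt_odd (i : Fin n) (m : ℕ) : pt i (2 * m + 1) = Sum.inr (i + (m : Fin n) + 1) := by
  have h1 : (2 * m + 1) % 2 = 1 := by omega
  have h2 : (2 * m + 1) / 2 = m := by omega
  simp [pt, h1, h2]
  rfl

lemma val_one' (hn : 3 ≤ n) : ((1 : Fin n) : ℕ) = 1 := by
  rw [show (1 : Fin n) = ((1 : ℕ) : Fin n) by norm_cast, Fin.val_natCast,
    Nat.mod_eq_of_lt (by omega)]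

lemma le_x_y (hn : 3 ≤ n) {p q : Fin n} :
    SCirc.le (Sum.inl p : SCirc n) (Sum.inr q) ↔ p = q ∨ p = q - 1 := by
  have hsub : ((q - 1 : Fin n) : ℕ) = ((q : ℕ) + n - 1) % n := by
    rw [Fin.sub_def]
    simp only [val_one' hn]
    congr 1
    omega
  show p = q ∨ (p : ℕ) = ((q : ℕ) + n - 1) % n ↔ _
  rw [← hsub, Fin.val_eq_val]

lemma le_pt_even (hn : 3 ≤ n) (i : Fin n) (m : ℕ) :
    SCirc.le (pt i (2 * m)) (pt i (2 * m + 1)) := by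
  rw [pt_even, pt_odd]
  show SCirc.le (Sum.inl _ : SCirc n) (Sum.inr _)
  rw [le_x_y hn]
  right; ring

lemma le_pt_odd (hn : 3 ≤ n) (i : Fin n) (m : ℕ) :
    SCirc.le (pt i (2 * (m + 1))) (pt i (2 * m + 1)) := by
  rw [pt_even, pt_odd]
  show SCirc.le (Sum.inl _ : SCirc n) (Sum.inr _)
  rw [le_x_y hn]
  left; push_cast; ring

lemma pt_mem (hn : 3 ≤ n) (i : Fin n) {k : ℕ} (hk : k ≤ 2 * n - 2) :
    pt i k ∈ ({SCirc.y i}ᶜ : Set (SCirc n)) := by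
  show (if k % 2 = 0 then (Sum.inl (i + ((k / 2 : ℕ) : Fin n)) : SCirc n)
    else Sum.inr (i + ((k / 2 : ℕ) : Fin n) + 1)) ∈ ({(Sum.inr i : SCirc n)}ᶜ : Set (SCirc n))
  by_cases h : k % 2 = 0
  · rw [if_pos h]
    show ¬ ((Sum.inl (i + ((k / 2 : ℕ) : Fin n)) : Fin n ⊕ Fin n) = Sum.inr i)
    exact Sum.inl_ne_inr
  · rw [if_neg h]
    show ¬ ((Sum.inr (i + ((k / 2 : ℕ) : Fin n) + 1) : Fin n ⊕ Fin n) = Sum.inr i)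
    intro hEq
    have hEq' : i + ((k / 2 : ℕ) : Fin n) + 1 = i := Sum.inr.inj hEq
    have h0 : (((k / 2 : ℕ) : Fin n) + 1 : Fin n) = 0 := by
      have h1 : i + (((k / 2 : ℕ) : Fin n) + 1) = i + 0 := by
        rw [add_zero, ← add_assoc]; exact hEq'
      exact add_left_cancel h1
    have h2 : ((((k / 2 : ℕ) + 1 : ℕ)) : Fin n) = 0 := by push_cast; exact h0
    have h3 : ((k / 2 : ℕ) + 1) % n = 0 := by
      have h := congrArg Fin.val h2
      rwa [Fin.val_natCast, Fin.val_zero] at h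
    have h4 : k / 2 + 1 < n := by omega
    have h5 := Nat.mod_eq_of_lt h4
    omega

lemma idx_le (hn : 3 ≤ n) (i : Fin n) (s : SCirc n) : idx i s ≤ 2 * n - 2 := by
  cases s with
  | inl j =>
    have := (j - i : Fin n).is_lt
    simp only [idx]; omega
  | inr j =>
    have := (j - i : Fin n).is_lt
    simp only [idx]; omega

lemma pt_idx (hn : 3 ≤ n) (i : Fin n) {s : SCirc n}
    (hs : s ∈ ({SCirc.y i}ᶜ : Set (SCirc n))) : pt i (idx i s) = s := by
  cases s with
  | inl j =>
    show pt i (2 * ((j - i : Fin n) : ℕ)) = _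
    rw [pt_even, Fin.cast_val_eq_self]
    congr 1
    ring
  | inr j =>
    have hj : j ≠ i := by
      intro h; subst h; exact hs rfl
    have hd : 1 ≤ ((j - i : Fin n) : ℕ) := by
      rcases Nat.eq_zero_or_pos ((j - i : Fin n) : ℕ) with h0 | h1
      · exfalso
        apply hj
        have : (j - i : Fin n) = 0 := Fin.ext (by simpa using h0)
        have := sub_eq_zero.mp this
        exact this
      · exact h1
    show pt i (2 * (((j - i : Fin n) : ℕ) - 1) + 1) = _
    rw [pt_odd, Nat.cast_sub hd, Fin.cast_val_eq_self]
    congr 1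
    push_cast
    ring

end

end SCircAux

namespace SCircAux

open Fin.CommRing

section
variable {n : ℕ} [NeZero n]

lemma val_sub_one {v : Fin n} (hv : 1 ≤ (v : ℕ)) :
    ((v - 1 : Fin n) : ℕ) = (v : ℕ) - 1 := by
  have h1 : (v - 1 : Fin n) = (((v : ℕ) - 1 : ℕ) : Fin n) := by
    rw [Nat.cast_sub hv, Nat.cast_one, Fin.cast_val_eq_self]
  rw [h1, Fin.val_natCast, Nat.mod_eq_of_lt (by have := v.is_lt; omega)]

lemma sub_val_pos {q i : Fin n} (hq : q ≠ i) : 1 ≤ ((q - i : Fin n) : ℕ) := by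
  rcases Nat.eq_zero_or_pos ((q - i : Fin n) : ℕ) with h0 | h1
  · exact absurd (sub_eq_zero.mp (Fin.ext (by simpa using h0))) hq
  · exact h1

lemma idx_adj (hn : 3 ≤ n) (i : Fin n) {p q : Fin n} (hq : q ≠ i)
    (h : SCirc.le (Sum.inl p : SCirc n) (Sum.inr q)) :
    idx i (Sum.inl p : SCirc n) = idx i (Sum.inr q : SCirc n) + 1 ∨
      idx i (Sum.inr q : SCirc n) = idx i (Sum.inl p : SCirc n) + 1 := by
  have hd : 1 ≤ ((q - i : Fin n) : ℕ) := sub_val_pos hq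
  rcases (le_x_y hn).mp h with rfl | rfl
  · left
    simp only [idx]
    omega
  · right
    have key : ((q - 1 - i : Fin n) : ℕ) = ((q - i : Fin n) : ℕ) - 1 := by
      have hqq : (q - 1 - i : Fin n) = (q - i) - 1 := by ring
      rw [hqq, val_sub_one hd]
    simp only [idx, key]

/-- Truncation of the fence at position `m`. -/
def trunc (hn : 3 ≤ n) (i : Fin n) (m : ℕ) (s : ({SCirc.y i}ᶜ : Set (SCirc n))) :
    ({SCirc.y i}ᶜ : Set (SCirc n)) :=
  ⟨pt i (min (idx i s.val) m),
    pt_mem hn i (le_trans (min_le_left _ _) (idx_le hn i s.val))⟩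

lemma trunc_le (hn : 3 ≤ n) (i : Fin n) (m : ℕ) {a b : ({SCirc.y i}ᶜ : Set (SCirc n))}
    (h : SCirc.le b.val a.val) :
    SCirc.le (trunc hn i m b).val (trunc hn i m a).val := by
  obtain ⟨bv, hb⟩ := b
  obtain ⟨av, ha⟩ := a
  show SCirc.le (pt i (min (idx i bv) m)) (pt i (min (idx i av) m))
  cases bv with
  | inl p =>
    cases av with
    | inl q =>
      have hpq : p = q := h
      subst hpq
      exact le_refl' _
    | inr q =>
      have hq : q ≠ i := by intro hqi; subst hqi; exact ha rfl
      have hadj := idx_adj hn i hq h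
      have hpb : pt i (idx i (Sum.inl p : SCirc n)) = Sum.inl p := pt_idx hn i hb
      have hpa : pt i (idx i (Sum.inr q : SCirc n)) = Sum.inr q := pt_idx hn i ha
      set jb := idx i (Sum.inl p : SCirc n) with hjb
      set ja := idx i (Sum.inr q : SCirc n) with hja
      rcases hadj with hj | hj
      · rcases le_or_gt m ja with hm | hm
        · have hmin : min jb m = min ja m := by omega
          rw [hmin]; exact le_refl' _
        · rw [min_eq_left (by omega), min_eq_left (by omega), hpb, hpa]; exact h
      · rcases le_or_gt m jb with hm | hm
        · have hmin : min jb m = min ja m := by omega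
          rw [hmin]; exact le_refl' _
        · rw [min_eq_left (by omega), min_eq_left (by omega), hpb, hpa]; exact h
  | inr p =>
    cases av with
    | inl q => exact absurd h (fun hf => hf)
    | inr q =>
      have hpq : p = q := h
      subst hpq
      exact le_refl' _

lemma trunc_continuous (hn : 3 ≤ n) (i : Fin n) (m : ℕ) : Continuous (trunc hn i m) := by
  rw [continuous_def]
  intro U hU
  rw [isOpen_subtype_iff (isOpen_compl_y i)] at hU ⊢
  intro a ha b hba
  exact hU _ ha _ (trunc_le hn i m hba)

/-- Truncation as a continuous map. -/
def truncCM (hn : 3 ≤ n) (i : Fin n) (m : ℕ) :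
    C(({SCirc.y i}ᶜ : Set (SCirc n)), ({SCirc.y i}ᶜ : Set (SCirc n))) :=
  ⟨trunc hn i m, trunc_continuous hn i m⟩

lemma trunc_step (hn : 3 ≤ n) (i : Fin n) (m : ℕ) : (truncCM hn i m).Homotopic (truncCM hn i (m + 1)) := by
  by_cases hpar : m % 2 = 0
  · apply homotopic_of_specializes
    intro s
    apply subtype_specializes_of_le
    show SCirc.le (pt i (min (idx i s.val) m)) (pt i (min (idx i s.val) (m + 1)))
    rcases le_or_gt (idx i s.val) m with hj | hj
    · rw [min_eq_left hj, min_eq_left (by omega)]; exact le_refl' _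
    · rw [min_eq_right (by omega), min_eq_right (by omega)]
      obtain ⟨k, rfl⟩ : ∃ k, m = 2 * k := ⟨m / 2, by omega⟩
      exact le_pt_even hn i k
  · refine (homotopic_of_specializes _ _ ?_).symm
    intro s
    apply subtype_specializes_of_le
    show SCirc.le (pt i (min (idx i s.val) (m + 1))) (pt i (min (idx i s.val) m))
    rcases le_or_gt (idx i s.val) m with hj | hj
    · rw [min_eq_left (by omega), min_eq_left hj]; exact le_refl' _
    · rw [min_eq_right (by omega), min_eq_right (by omega)]
      obtain ⟨k, rfl⟩ : ∃ k, m = 2 * k + 1 := ⟨m / 2, by omega⟩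
      have h2 : 2 * k + 1 + 1 = 2 * (k + 1) := by ring
      rw [h2]
      exact le_pt_odd hn i k

lemma trunc_chain (hn : 3 ≤ n) (i : Fin n) (m : ℕ) : (truncCM hn i 0).Homotopic (truncCM hn i m) := by
  induction m with
  | zero => exact ContinuousMap.Homotopic.refl _
  | succ m ih => exact ih.trans (trunc_step hn i m)

end

end SCircAux

/-- For every `n ≥ 3` and every index `0 ≤ i < n`, the subspace
`𝕊¹_n − {y_i}` is open in `𝕊¹_n` and is contractible. -/



theorem scirc_compl_y_isOpen_contractible (n : ℕ) (hn : 3 ≤ n) (i : Fin n) :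
    IsOpen ({SCirc.y i}ᶜ : Set (SCirc n)) ∧
      ContractibleSpace ({SCirc.y i}ᶜ : Set (SCirc n)) := by
  haveI : NeZero n := ⟨by omega⟩
  refine ⟨SCircAux.isOpen_compl_y i, ?_⟩
  rw [contractible_iff_id_nullhomotopic]
  set c : ({SCirc.y i}ᶜ : Set (SCirc n)) :=
    ⟨SCircAux.pt i 0, SCircAux.pt_mem hn i (by omega)⟩ with hc
  have hid : ContinuousMap.id ({SCirc.y i}ᶜ : Set (SCirc n))
      = SCircAux.truncCM hn i (2 * n - 2) := by
    ext s
    show s.val = SCircAux.pt i (min (SCircAux.idx i s.val) (2 * n - 2))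
    rw [min_eq_left (SCircAux.idx_le hn i s.val), SCircAux.pt_idx hn i s.2]
  have hconst : SCircAux.truncCM hn i 0
      = ContinuousMap.const ({SCirc.y i}ᶜ : Set (SCirc n)) c := by
    ext s
    show SCircAux.pt i (min (SCircAux.idx i s.val) 0) = SCircAux.pt i 0
    rw [Nat.min_zero]
  refine ⟨c, ?_⟩
  have h := (SCircAux.trunc_chain hn i (2 * n - 2)).symm
  rw [← hid, hconst] at h
  exact h
end

section
/- Let ⋁_{i=1}^m 𝕊¹_{n_i}, with each n_i ≥ 2, be the wedge of m finite models of the circle, formed by identifying the points y_0 of all factors to a single point y_0. Then TC(⋁_{i=1}^m 𝕊¹_{n_i}) ≤ 4. -/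
open Set

/-- `Q ⊆ X × X` admits a motion planner: a continuous map `s` from `Q` to the path
space `P(X) = C(I, X)` (with the compact-open topology) that is a section of the
endpoint map `π : C(I, X) → X × X`, `γ ↦ (γ 0, γ 1)`. -/
def AdmitsMotionPlanner {X : Type*} [TopologicalSpace X] (Q : Set (X × X)) : Prop :=
  ∃ s : C(Q, C(unitInterval, X)), ∀ q : Q, ((s q) 0, (s q) 1) = (q : X × X)

/-- `X × X` is covered by `k` open sets, each admitting a motion planner. -/
def TCCover (X : Type*) [TopologicalSpace X] (k : ℕ) : Prop :=
  ∃ Q : Fin k → Set (X × X),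
    (∀ i, IsOpen (Q i)) ∧ (⋃ i, Q i) = Set.univ ∧ ∀ i, AdmitsMotionPlanner (Q i)

/-- The (unreduced) topological complexity of `X`: the least `k` such that `X × X`
can be covered by `k` open sets, each admitting a motion planner. -/
noncomputable def topologicalComplexity (X : Type*) [TopologicalSpace X] : ℕ :=
  sInf {k | TCCover X k}
/-- `a` is the distinguished point `y_0` of `𝕊¹_k`. -/
def IsBasePt {k : ℕ} (a : SCirc k) : Prop := ∃ j : Fin k, a = SCirc.y j ∧ (j : ℕ) = 0

/-- The relation identifying the points `y_0` of all the circles `𝕊¹_{f i}`. -/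
def wedgeRel (m : ℕ) (f : Fin m → ℕ) (a b : Σ i : Fin m, SCirc (f i)) : Prop :=
  a = b ∨ (IsBasePt a.2 ∧ IsBasePt b.2)

/-- The wedge `⋁_{i} 𝕊¹_{f i}`: the quotient of the disjoint union of the finite
models `𝕊¹_{f i}` identifying the points `y_0` of all factors to a single point,
with the quotient topology. -/
abbrev WedgeSCirc (m : ℕ) (f : Fin m → ℕ) : Type := Quot (wedgeRel m f)

section Planner

variable {X : Type*} [TopologicalSpace X]

noncomputable def stepFam {G : Type*} (a b : G → X) (q : G) :
    unitInterval → X := fun t => if (t : ℝ) < 1 then a q else b q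

lemma stepFam_cont {G : Type*} [TopologicalSpace G] {a b : G → X}
    (ha : Continuous a) (hb : Continuous b) (h : ∀ q, a q ⤳ b q) :
    Continuous (fun p : G × unitInterval => stepFam a b p.1 p.2) := by
  rw [continuous_def]
  intro U hU
  have hsub : b ⁻¹' U ⊆ a ⁻¹' U := fun q hq => (h q).mem_open hU hq
  have hset : (fun p : G × unitInterval => stepFam a b p.1 p.2) ⁻¹' U
      = ((b ⁻¹' U) ×ˢ (univ : Set unitInterval)) ∪
        ((a ⁻¹' U) ×ˢ {t : unitInterval | (t : ℝ) < 1}) := by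
    ext ⟨q, t⟩
    simp only [mem_preimage, stepFam, mem_union, Set.mem_prod, mem_univ, and_true,
      mem_setOf_eq]
    by_cases ht : (t : ℝ) < 1
    · simp only [if_pos ht, ht, and_true]
      exact ⟨fun h' => Or.inr h', fun h' => h'.elim (fun hb' => hsub hb') id⟩
    · simp only [if_neg ht, ht, and_false, or_false, if_false]
  rw [hset]
  exact ((hb.isOpen_preimage U hU).prod isOpen_univ).union
    ((ha.isOpen_preimage U hU).prod (isOpen_lt continuous_subtype_val continuous_const))

noncomputable def stepPath {G : Type*} [TopologicalSpace G] (a b : C(G, X))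
    (h : ∀ q, a q ⤳ b q) (q : G) : Path (a q) (b q) where
  toFun := stepFam (⇑a) (⇑b) q
  continuous_toFun := (stepFam_cont a.continuous b.continuous h).comp
    (Continuous.prodMk_right q)
  source' := by simp [stepFam]
  target' := by simp [stepFam]

lemma stepPath_cont {G : Type*} [TopologicalSpace G] (a b : C(G, X))
    (h : ∀ q, a q ⤳ b q) : Continuous ↿(stepPath a b h) :=
  stepFam_cont a.continuous b.continuous h

/-- `Q ⊆ X × X` admits a motion planner (see below) as soon as there is a "zigzag" of
continuous maps `g 0, …, g N : Q → X` starting at the first projection, ending at the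
second, with consecutive maps pointwise comparable in the specialization preorder. -/
lemma planner_of_chain' (Q : Set (X × X)) (N : ℕ) (g : ℕ → C(Q, X))
    (h0 : ∀ q : Q, g 0 q = (q : X × X).1) (hN : ∀ q : Q, g N q = (q : X × X).2)
    (hdir : ∀ s, s < N → (∀ q, g s q ⤳ g (s + 1) q) ∨ (∀ q, g (s + 1) q ⤳ g s q)) :
    ∃ s : C(Q, C(unitInterval, X)), ∀ q : Q, ((s q) 0, (s q) 1) = (q : X × X) := by
  have key : ∀ n, n ≤ N → ∃ γ : ∀ q : Q, Path (g 0 q) (g n q), Continuous ↿γ := by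
    intro n
    induction n with
    | zero =>
      intro _
      refine ⟨fun q => Path.refl _, ?_⟩
      show Continuous fun p : Q × unitInterval => g 0 p.1
      exact (g 0).continuous.comp continuous_fst
    | succ n ih =>
      intro hn
      obtain ⟨γ, hγ⟩ := ih (by omega)
      rcases hdir n (by omega) with h | h
      · exact ⟨fun q => (γ q).trans (stepPath (g n) (g (n + 1)) h q),
          Path.trans_continuous_family _ hγ _ (stepPath_cont _ _ h)⟩
      · exact ⟨fun q => (γ q).trans ((stepPath (g (n + 1)) (g n) h q).symm),
          Path.trans_continuous_family _ hγ _
            (Path.symm_continuous_family _ (stepPath_cont _ _ h))⟩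
  obtain ⟨γ, hγ⟩ := key N le_rfl
  refine ⟨ContinuousMap.curry ⟨fun p : Q × unitInterval => γ p.1 p.2, hγ⟩, ?_⟩
  intro q
  show (γ q 0, γ q 1) = (q : X × X)
  rw [Path.source, Path.target, h0, hN]

end Planner

namespace SCirc

variable {n : ℕ}

instance : DecidableEq (SCirc n) := inferInstanceAs (DecidableEq (Fin n ⊕ Fin n))

lemma le_refl : ∀ a : SCirc n, le a a
  | Sum.inl _ => rfl
  | Sum.inr _ => rfl

/-- Position along the fence `𝕊¹_n ∖ {y₀}`: `x j ↦ 2j`, `y j ↦ 2j - 1`. -/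
def pos : SCirc n → ℕ
  | Sum.inl j => 2 * j.val
  | Sum.inr j => 2 * j.val - 1

/-- The point of the fence at position `k`. -/
def pt (hn : 0 < n) (k : ℕ) : SCirc n :=
  if k % 2 = 0 then Sum.inl ⟨k / 2 % n, Nat.mod_lt _ hn⟩
  else Sum.inr ⟨(k + 1) / 2 % n, Nat.mod_lt _ hn⟩

lemma le_pt_adj_even (hn : 0 < n) (k : ℕ) (hk : k % 2 = 0) :
    le (pt hn k) (pt hn (k + 1)) := by
  unfold pt
  erw [if_pos hk, if_neg (show ¬ (k + 1) % 2 = 0 by omega)]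
  show _ ∨ _
  refine Or.inr ?_
  show k / 2 % n = ((k + 1 + 1) / 2 % n + n - 1) % n
  have h2 : (k + 1 + 1) / 2 = k / 2 + 1 := by omega
  rw [h2]
  have h1 : (k / 2 + 1) % n + n - 1 = (k / 2 + 1) % n + (n - 1) := by
    have := Nat.mod_lt (k / 2 + 1) hn
    omega
  rw [h1, Nat.mod_add_mod]
  have h3 : k / 2 + 1 + (n - 1) = k / 2 + n := by omega
  rw [h3, Nat.add_mod_right]

lemma le_pt_adj_odd (hn : 0 < n) (k : ℕ) (hk : k % 2 = 1) :
    le (pt hn (k + 1)) (pt hn k) := by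
  unfold pt
  erw [if_pos (show (k + 1) % 2 = 0 by omega), if_neg (show ¬ k % 2 = 0 by omega)]
  exact Or.inl rfl

/-- The distinguished point `y₀`. -/
def y0 (hn : 0 < n) : SCirc n := Sum.inr ⟨0, hn⟩

lemma pos_le (hn : 0 < n) (z : SCirc n) : pos z ≤ 2 * n - 2 := by
  cases z with
  | inl j => have := j.isLt; show 2 * j.val ≤ _; omega
  | inr j => have := j.isLt; show 2 * j.val - 1 ≤ _; omega

/-- Collapse of the fence towards `x_{n-1}`, at time `s`; fixes `y₀`. -/
def collapse (hn : 0 < n) (s : ℕ) (z : SCirc n) : SCirc n :=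
  if z = y0 hn then z else pt hn (min (max (pos z) s) (2 * n - 2))

lemma collapse_y0 (hn : 0 < n) (s : ℕ) : collapse hn s (y0 hn) = y0 hn := by
  simp [collapse]

lemma collapse_zero (hn : 0 < n) (z : SCirc n) : collapse hn 0 z = z := by
  unfold collapse
  split
  · rfl
  · rename_i hz
    cases z with
    | inl j =>
      have hj := j.isLt
      show pt hn (min (max (2 * j.val) 0) (2 * n - 2)) = _
      rw [show min (max (2 * j.val) 0) (2 * n - 2) = 2 * j.val by omega]
      unfold pt
      erw [if_pos (show 2 * j.val % 2 = 0 by omega)]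
      show Sum.inl _ = Sum.inl j
      congr 1
      refine Fin.ext ?_
      show 2 * j.val / 2 % n = j.val
      rw [show 2 * j.val / 2 = j.val by omega, Nat.mod_eq_of_lt hj]
    | inr j =>
      have hj := j.isLt
      have hj0 : j.val ≠ 0 := by
        intro h
        exact hz (by
          show Sum.inr j = Sum.inr (⟨0, hn⟩ : Fin n)
          rw [show j = (⟨0, hn⟩ : Fin n) from Fin.ext h])
      show pt hn (min (max (2 * j.val - 1) 0) (2 * n - 2)) = _
      rw [show min (max (2 * j.val - 1) 0) (2 * n - 2) = 2 * j.val - 1 by omega]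
      unfold pt
      erw [if_neg (show ¬ (2 * j.val - 1) % 2 = 0 by omega)]
      show Sum.inr _ = Sum.inr j
      congr 1
      exact Fin.ext (by
        show (2 * j.val - 1 + 1) / 2 % n = j.val
        rw [show (2 * j.val - 1 + 1) / 2 = j.val by omega, Nat.mod_eq_of_lt hj])

lemma ne_y0_inl (hn : 0 < n) (i : Fin n) : (Sum.inl i : SCirc n) ≠ y0 hn := by
  simp [y0]

lemma collapse_mono (hn : 0 < n) (s : ℕ) {a b : SCirc n} (hab : le a b)
    (hb : b ≠ y0 hn) : le (collapse hn s a) (collapse hn s b) := by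
  cases a with
  | inr i =>
    cases b with
    | inl j => exact absurd hab (by exact fun h => h)
    | inr j =>
      have : i = j := hab
      subst this
      exact le_refl _
  | inl i =>
    cases b with
    | inl j =>
      have : i = j := hab
      subst this
      exact le_refl _
    | inr j =>
      have hj0 : j.val ≠ 0 := by
        intro h
        exact hb (by
          show Sum.inr j = Sum.inr (⟨0, hn⟩ : Fin n)
          rw [show j = (⟨0, hn⟩ : Fin n) from Fin.ext h])
      have hjlt := j.isLt
      unfold collapse
      erw [if_neg (ne_y0_inl hn i), if_neg hb]
      rcases hab with h | h
      · -- a = x_j, b = y_j : positions 2j and 2j-1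
        subst h
        show le (pt hn (min (max (2 * i.val) s) (2 * n - 2)))
          (pt hn (min (max (2 * i.val - 1) s) (2 * n - 2)))
        set k : ℕ := 2 * i.val - 1 with hk
        have hka : 2 * i.val = k + 1 := by omega
        rw [hka]
        have hcl : min (max (k + 1) s) (2 * n - 2) = min (max k s) (2 * n - 2) ∨
            (min (max k s) (2 * n - 2) = k ∧
             min (max (k + 1) s) (2 * n - 2) = k + 1) := by omega
      -- note : i.val ≥ 1 since j = i and j.val ≠ 0
        rcases hcl with h1 | ⟨h1, h2⟩
        · rw [h1]; exact le_refl _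
        · rw [h1, h2]
          exact le_pt_adj_odd hn k (by omega)
      · -- a = x_{j-1}, b = y_j : positions 2j-2 and 2j-1
        have hi : i.val = j.val - 1 := by
          rw [h, show j.val + n - 1 = (j.val - 1) + n by omega, Nat.add_mod_right,
            Nat.mod_eq_of_lt (by omega)]
        show le (pt hn (min (max (2 * i.val) s) (2 * n - 2)))
          (pt hn (min (max (2 * j.val - 1) s) (2 * n - 2)))
        set k : ℕ := 2 * i.val with hk
        have hkb : 2 * j.val - 1 = k + 1 := by omega
        rw [hkb]
        have hcl : min (max (k + 1) s) (2 * n - 2) = min (max k s) (2 * n - 2) ∨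
            (min (max k s) (2 * n - 2) = k ∧
             min (max (k + 1) s) (2 * n - 2) = k + 1) := by omega
        rcases hcl with h1 | ⟨h1, h2⟩
        · rw [h1]; exact le_refl _
        · rw [h1, h2]
          exact le_pt_adj_even hn k (by omega)

lemma collapse_step (hn : 0 < n) (s : ℕ) (z : SCirc n) :
    (s % 2 = 0 → le (collapse hn s z) (collapse hn (s + 1) z)) ∧
    (s % 2 = 1 → le (collapse hn (s + 1) z) (collapse hn s z)) := by
  unfold collapse
  split
  · exact ⟨fun _ => le_refl _, fun _ => le_refl _⟩
  · set k : ℕ := pos z with hk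
    have hcl : min (max k (s + 1)) (2 * n - 2) = min (max k s) (2 * n - 2) ∨
        (min (max k s) (2 * n - 2) = s ∧
         min (max k (s + 1)) (2 * n - 2) = s + 1) := by omega
    rcases hcl with h1 | ⟨h1, h2⟩
    · rw [h1]
      exact ⟨fun _ => le_refl _, fun _ => le_refl _⟩
    · rw [h1, h2]
      exact ⟨fun hp => le_pt_adj_even hn s hp, fun hp => le_pt_adj_odd hn s hp⟩

lemma collapse_top (hn : 0 < n) (s : ℕ) (hs : 2 * n - 2 ≤ s) (z : SCirc n)
    (hz : z ≠ y0 hn) : collapse hn s z = Sum.inl ⟨n - 1, by omega⟩ := by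
  unfold collapse
  rw [if_neg hz]
  rw [show min (max (pos z) s) (2 * n - 2) = 2 * n - 2 by omega]
  unfold pt
  erw [if_pos (show (2 * n - 2) % 2 = 0 by omega)]
  congr 1
  exact Fin.ext (by
    show (2 * n - 2) / 2 % n = n - 1
    rw [show (2 * n - 2) / 2 = n - 1 by omega, Nat.mod_eq_of_lt (by omega)])

lemma le_top_y0 (hn : 0 < n) :
    le (Sum.inl ⟨n - 1, by omega⟩ : SCirc n) (y0 hn) := by
  show _ ∨ _
  refine Or.inr ?_
  show n - 1 = (0 + n - 1) % n
  rw [Nat.zero_add, Nat.mod_eq_of_lt (by omega)]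

end SCirc

namespace WedgeAux

variable {m : ℕ} {f : Fin m → ℕ}

def mkw (i : Fin m) (z : SCirc (f i)) : WedgeSCirc m f := Quot.mk _ ⟨i, z⟩

lemma isOpen_iff {U : Set (WedgeSCirc m f)} :
    IsOpen U ↔ ∀ (i : Fin m) (a b : SCirc (f i)),
      SCirc.le a b → mkw i b ∈ U → mkw i a ∈ U := by
  rw [← (isQuotientMap_quot_mk (r := wedgeRel m f)).isOpen_preimage, isOpen_sigma_iff]
  constructor
  · intro h i a b hab hb
    exact h i b hb a hab
  · intro h i a ha b hba
    exact h i b a hba ha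

lemma spec_of_le {i : Fin m} {a b : SCirc (f i)} (h : SCirc.le a b) :
    mkw i a ⤳ mkw i b := by
  rw [specializes_iff_forall_open]
  intro U hU hb
  exact isOpen_iff.mp hU i a b h hb

lemma basept_iff {k : ℕ} (hk : 0 < k) (z : SCirc k) :
    IsBasePt z ↔ z = SCirc.y0 hk := by
  constructor
  · rintro ⟨j, rfl, hj⟩
    show Sum.inr j = Sum.inr (⟨0, hk⟩ : Fin k)
    rw [show j = (⟨0, hk⟩ : Fin k) from Fin.ext hj]
  · rintro rfl
    exact ⟨⟨0, hk⟩, rfl, rfl⟩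

lemma wedgeRel_equiv : Equivalence (wedgeRel m f) := by
  constructor
  · exact fun a => Or.inl rfl
  · rintro a b (rfl | ⟨h1, h2⟩)
    · exact Or.inl rfl
    · exact Or.inr ⟨h2, h1⟩
  · rintro a b c (rfl | ⟨h1, h2⟩) h
    · exact h
    · rcases h with rfl | ⟨h3, h4⟩
      · exact Or.inr ⟨h1, h2⟩
      · exact Or.inr ⟨h1, h4⟩

lemma mk_eq_mk {a b : Σ i : Fin m, SCirc (f i)} :
    Quot.mk (wedgeRel m f) a = Quot.mk (wedgeRel m f) b ↔ wedgeRel m f a b := by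
  rw [Quot.eq]
  exact wedgeRel_equiv.eqvGen_iff

lemma hn0 (hf : ∀ i, 2 ≤ f i) (i : Fin m) : 0 < f i :=
  lt_of_lt_of_le (by norm_num) (hf i)

variable (hm : 0 < m) (hf : ∀ i, 2 ≤ f i)

def bp : WedgeSCirc m f := mkw ⟨0, hm⟩ (SCirc.y0 (hn0 hf ⟨0, hm⟩))

lemma mkw_eq_bp_iff {i : Fin m} {z : SCirc (f i)} :
    mkw i z = bp hm hf ↔ IsBasePt z := by
  unfold bp mkw
  rw [mk_eq_mk]
  constructor
  · rintro (h | ⟨h1, _⟩)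
    · obtain ⟨h1, h2⟩ := Sigma.mk.inj_iff.mp h
      subst h1
      exact (basept_iff (hn0 hf _) z).mpr (eq_of_heq h2)
    · exact h1
  · intro h
    exact Or.inr ⟨h, (basept_iff _ _).mpr rfl⟩

def wcol (s : ℕ) : WedgeSCirc m f → WedgeSCirc m f :=
  Quot.lift (fun p => mkw p.1 (SCirc.collapse (hn0 hf p.1) s p.2))
    (by
      rintro a b (rfl | ⟨h1, h2⟩)
      · rfl
      · apply Quot.sound
        refine Or.inr ⟨?_, ?_⟩
        · rw [(basept_iff (hn0 hf a.1) a.2).mp h1, SCirc.collapse_y0]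
          exact (basept_iff _ _).mpr rfl
        · rw [(basept_iff (hn0 hf b.1) b.2).mp h2, SCirc.collapse_y0]
          exact (basept_iff _ _).mpr rfl)

lemma wcol_mkw (s : ℕ) (i : Fin m) (z : SCirc (f i)) :
    wcol hf s (mkw i z) = mkw i (SCirc.collapse (hn0 hf i) s z) := rfl

lemma wcol_zero (w : WedgeSCirc m f) : wcol hf 0 w = w := by
  induction w using Quot.ind with
  | _ p =>
    show mkw p.1 (SCirc.collapse (hn0 hf p.1) 0 p.2) = Quot.mk _ p
    rw [SCirc.collapse_zero]
    rfl

def Aset : Set (WedgeSCirc m f) := {w | w ≠ bp hm hf}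

def Kset : Set (WedgeSCirc m f) := {w | w ⤳ bp hm hf}

lemma isOpen_Aset : IsOpen (Aset hm hf) := by
  rw [isOpen_iff]
  intro i a b hab hb ha
  apply hb
  rw [mkw_eq_bp_iff hm hf] at ha ⊢
  rw [basept_iff (hn0 hf i)] at ha
  subst ha
  cases b with
  | inl j => exact absurd hab (fun h => h)
  | inr j =>
    have : (⟨0, hn0 hf i⟩ : Fin (f i)) = j := hab
    exact ⟨j, rfl, by rw [← this]⟩

lemma isOpen_Kset : IsOpen (Kset hm hf) := by
  rw [isOpen_iff]
  intro i a b hab hb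
  exact (spec_of_le hab).trans hb

lemma wcol_mono_spec (s : ℕ) {i : Fin m} {a b : SCirc (f i)} (hab : SCirc.le a b)
    (hb : mkw i b ∈ Aset hm hf) :
    wcol hf s (mkw i a) ⤳ wcol hf s (mkw i b) := by
  rw [wcol_mkw, wcol_mkw]
  refine spec_of_le (SCirc.collapse_mono _ s hab ?_)
  intro h
  exact hb ((mkw_eq_bp_iff hm hf).mpr ((basept_iff _ _).mpr h))

lemma continuous_wcol_A (s : ℕ) :
    Continuous (fun w : (Aset hm hf) => wcol hf s w.val) := by
  rw [continuous_def]
  intro V hV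
  have key : IsOpen (Aset hm hf ∩ wcol hf s ⁻¹' V) := by
    rw [isOpen_iff]
    intro i a b hab hb
    exact ⟨isOpen_iff.mp (isOpen_Aset hm hf) i a b hab hb.1,
      (wcol_mono_spec hm hf s hab hb.1).mem_open hV hb.2⟩
  have hset : (fun w : (Aset hm hf) => wcol hf s w.val) ⁻¹' V
      = Subtype.val ⁻¹' (Aset hm hf ∩ wcol hf s ⁻¹' V) := by
    ext w
    simp [w.2]
  rw [hset]
  exact key.preimage continuous_subtype_val

lemma wcol_step_spec (s : ℕ) (w : WedgeSCirc m f) :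
    (s % 2 = 0 → wcol hf s w ⤳ wcol hf (s + 1) w) ∧
    (s % 2 = 1 → wcol hf (s + 1) w ⤳ wcol hf s w) := by
  induction w using Quot.ind with
  | _ p =>
    obtain ⟨i, z⟩ := p
    constructor
    · intro hp
      exact spec_of_le ((SCirc.collapse_step (hn0 hf i) s z).1 hp)
    · intro hp
      exact spec_of_le ((SCirc.collapse_step (hn0 hf i) s z).2 hp)

lemma wcol_top_spec (s : ℕ) (hs : ∀ i, 2 * f i - 2 ≤ s) (w : WedgeSCirc m f)
    (hw : w ≠ bp hm hf) : wcol hf s w ⤳ bp hm hf := by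
  induction w using Quot.ind with
  | _ p =>
    obtain ⟨i, z⟩ := p
    have hz : z ≠ SCirc.y0 (hn0 hf i) := by
      intro h
      exact hw ((mkw_eq_bp_iff hm hf).mpr ((basept_iff _ _).mpr h))
    have h1 : wcol hf s (mkw i z) = mkw i (Sum.inl ⟨f i - 1, by have := hf i; omega⟩) := by
      rw [wcol_mkw, SCirc.collapse_top _ s (hs i) z hz]
    show wcol hf s (mkw i z) ⤳ bp hm hf
    rw [h1, show bp hm hf = mkw i (SCirc.y0 (hn0 hf i)) from
      ((mkw_eq_bp_iff hm hf).mpr ((basept_iff _ _).mpr rfl)).symm]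
    exact spec_of_le (SCirc.le_top_y0 _)


/-- A chain of continuous maps contracting the open set `U` to the base point,
with consecutive maps pointwise comparable in the specialization preorder. -/
structure BpChain (hm : 0 < m) (hf : ∀ i, 2 ≤ f i) (U : Set (WedgeSCirc m f))
    (L : ℕ) where
  c : ℕ → (U → WedgeSCirc m f)
  cont : ∀ r, Continuous (c r)
  c0 : ∀ w : U, c 0 w = w.val
  ctop : ∀ w : U, c L w = bp hm hf
  dir : ∀ r, r < L → (∀ w, c r w ⤳ c (r + 1) w) ∨ (∀ w, c (r + 1) w ⤳ c r w)


lemma planner_prod {U V : Set (WedgeSCirc m f)} {L1 L2 : ℕ} (hL2 : 0 < L2)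
    (h1 : BpChain hm hf U L1) (h2 : BpChain hm hf V L2) :
    ∃ s : C(↑(U ×ˢ V), C(unitInterval, WedgeSCirc m f)),
      ∀ q : ↑(U ×ˢ V), ((s q) 0, (s q) 1) = (q : WedgeSCirc m f × WedgeSCirc m f) := by
  have contpr1 : Continuous (fun q : ↑(U ×ˢ V) => (⟨q.val.1, q.2.1⟩ : U)) :=
    Continuous.subtype_mk (continuous_fst.comp continuous_subtype_val) _
  have contpr2 : Continuous (fun q : ↑(U ×ˢ V) => (⟨q.val.2, q.2.2⟩ : V)) :=
    Continuous.subtype_mk (continuous_snd.comp continuous_subtype_val) _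
  set g : ℕ → C(↑(U ×ˢ V), WedgeSCirc m f) := fun r =>
    if hr : r ≤ L1 then ⟨fun q => h1.c r ⟨q.val.1, q.2.1⟩, (h1.cont r).comp contpr1⟩
    else ⟨fun q => h2.c (L1 + L2 - r) ⟨q.val.2, q.2.2⟩, (h2.cont _).comp contpr2⟩
    with hg
  have ge1 : ∀ r, r ≤ L1 → ∀ q, g r q = h1.c r ⟨q.val.1, q.2.1⟩ := by
    intro r hr q
    rw [hg]
    simp only [dif_pos hr]
    rfl
  have ge2 : ∀ r, ¬ r ≤ L1 → ∀ q, g r q = h2.c (L1 + L2 - r) ⟨q.val.2, q.2.2⟩ := by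
    intro r hr q
    rw [hg]
    simp only [dif_neg hr]
    rfl
  apply planner_of_chain' (U ×ˢ V) (L1 + L2) g
  · intro q
    rw [ge1 0 (by omega) q, h1.c0]
  · intro q
    rw [ge2 (L1 + L2) (by omega) q, show L1 + L2 - (L1 + L2) = 0 by omega, h2.c0]
  · intro r hr
    rcases Nat.lt_or_ge r L1 with h | h
    · rcases h1.dir r h with hd | hd
      · left
        intro q
        rw [ge1 r (by omega) q, ge1 (r + 1) (by omega) q]
        exact hd _
      · right
        intro q
        rw [ge1 r (by omega) q, ge1 (r + 1) (by omega) q]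
        exact hd _
    · rcases Nat.eq_or_lt_of_le h with he | hlt
      · -- boundary step : r = L1
        rcases h2.dir (L2 - 1) (by omega) with hd | hd
        · right
          intro q
          rw [ge1 r (by omega) q, ge2 (r + 1) (by omega) q, ← he, h1.ctop]
          have hx := hd ⟨q.val.2, q.2.2⟩
          rw [show L2 - 1 + 1 = L2 by omega, h2.ctop] at hx
          rw [show L1 + L2 - (L1 + 1) = L2 - 1 by omega]
          exact hx
        · left
          intro q
          rw [ge1 r (by omega) q, ge2 (r + 1) (by omega) q, ← he, h1.ctop]
          have hx := hd ⟨q.val.2, q.2.2⟩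
          rw [show L2 - 1 + 1 = L2 by omega, h2.ctop] at hx
          rw [show L1 + L2 - (L1 + 1) = L2 - 1 by omega]
          exact hx
      · -- both in the second chain
        have h1' : L1 + L2 - r = (L1 + L2 - r - 1) + 1 := by omega
        have h2' : L1 + L2 - (r + 1) = L1 + L2 - r - 1 := by omega
        rcases h2.dir (L1 + L2 - r - 1) (by omega) with hd | hd
        · right
          intro q
          rw [ge2 r (by omega) q, ge2 (r + 1) (by omega) q, h1', h2']
          exact hd _
        · left
          intro q
          rw [ge2 r (by omega) q, ge2 (r + 1) (by omega) q, h1', h2']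
          exact hd _

/-- The contracting chain on `A = W ∖ {*}`. -/
noncomputable def chainA (S : ℕ) (hS : ∀ i, 2 * f i - 2 ≤ S) :
    BpChain hm hf (Aset hm hf) (S + 1) where
  c r := if r ≤ S then fun w => wcol hf r w.val else fun _ => bp hm hf
  cont r := by
    split
    · exact continuous_wcol_A hm hf r
    · exact continuous_const
  c0 w := by
    rw [if_pos (by omega : (0 : ℕ) ≤ S)]
    exact wcol_zero hf w.val
  ctop w := by
    rw [if_neg (by omega : ¬ S + 1 ≤ S)]
  dir r hr := by
    rcases Nat.lt_or_ge r S with h | h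
    · rcases Nat.even_or_odd r with he | ho
      · left
        intro w
        rw [if_pos (by omega : r ≤ S), if_pos (by omega : r + 1 ≤ S)]
        exact (wcol_step_spec hf r w.val).1 (Nat.even_iff.mp he)
      · right
        intro w
        rw [if_pos (by omega : r ≤ S), if_pos (by omega : r + 1 ≤ S)]
        exact (wcol_step_spec hf r w.val).2 (Nat.odd_iff.mp ho)
    · have hrS : r = S := by omega
      left
      intro w
      rw [if_pos (by omega : r ≤ S), if_neg (by omega : ¬ r + 1 ≤ S)]
      exact wcol_top_spec hm hf r (fun i => by have := hS i; omega) w.val w.2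

/-- The contracting chain on `K = {w | w ⤳ *}`. -/
def chainK : BpChain hm hf (Kset hm hf) 1 where
  c r := if r = 0 then fun w => w.val else fun _ => bp hm hf
  cont r := by
    split
    · exact continuous_subtype_val
    · exact continuous_const
  c0 w := by
    rw [if_pos rfl]
  ctop w := by
    rw [if_neg (by omega : ¬ (1 : ℕ) = 0)]
  dir r hr := by
    have hr0 : r = 0 := by omega
    subst hr0
    left
    intro w
    rw [if_pos rfl, if_neg (by omega : ¬ (0 : ℕ) + 1 = 0)]
    exact w.2


end WedgeAux

/-- Let `⋁_{i=1}^m 𝕊¹_{n_i}`, with each `n_i ≥ 2`, be the wedge of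
`m` finite models of the circle, formed by identifying the points `y_0` of all
factors to a single point.  Then `TC(⋁_{i=1}^m 𝕊¹_{n_i}) ≤ 4`. -/
theorem tc_wedge_scirc_le_four (m : ℕ) (hm : 0 < m) (f : Fin m → ℕ)
    (hf : ∀ i, 2 ≤ f i) :
    topologicalComplexity (WedgeSCirc m f) ≤ 4 := by
  apply Nat.sInf_le
  show TCCover (WedgeSCirc m f) 4
  set S : ℕ := 2 * Finset.univ.sup f with hSdef
  have hS : ∀ i, 2 * f i - 2 ≤ S := by
    intro i
    have := Finset.le_sup (f := f) (Finset.mem_univ i)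
    omega
  set A : Set (WedgeSCirc m f) := WedgeAux.Aset hm hf with hAdef
  set K : Set (WedgeSCirc m f) := WedgeAux.Kset hm hf with hKdef
  have hA : IsOpen A := WedgeAux.isOpen_Aset hm hf
  have hK : IsOpen K := WedgeAux.isOpen_Kset hm hf
  have cA : WedgeAux.BpChain hm hf A (S + 1) := WedgeAux.chainA hm hf S hS
  have cK : WedgeAux.BpChain hm hf K 1 := WedgeAux.chainK hm hf
  refine ⟨![A ×ˢ A, K ×ˢ A, A ×ˢ K, K ×ˢ K], ?_, ?_, ?_⟩
  · intro i
    fin_cases i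
    · exact hA.prod hA
    · exact hK.prod hA
    · exact hA.prod hK
    · exact hK.prod hK
  · ext p
    simp only [Set.mem_iUnion, Set.mem_univ, iff_true]
    have h1 : ∀ w : WedgeSCirc m f, w ∈ A ∨ w ∈ K := by
      intro w
      by_cases hw : w = WedgeAux.bp hm hf
      · right
        show w ⤳ WedgeAux.bp hm hf
        rw [hw]
      · left
        exact hw
    rcases h1 p.1 with ha | ha <;> rcases h1 p.2 with hb | hb
    · exact ⟨0, ⟨ha, hb⟩⟩
    · exact ⟨2, ⟨ha, hb⟩⟩
    · exact ⟨1, ⟨ha, hb⟩⟩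
    · exact ⟨3, ⟨ha, hb⟩⟩
  · intro i
    fin_cases i
    · exact WedgeAux.planner_prod hm hf (by omega) cA cA
    · exact WedgeAux.planner_prod hm hf (by omega) cK cA
    · exact WedgeAux.planner_prod hm hf (by omega) cA cK
    · exact WedgeAux.planner_prod hm hf (by omega) cK cK
end
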